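/- Let α, β ∈ ℝ with (α,β) ≠ (0,0) and let f : ℝ → ℝ be continuous on [−1,1]. Let u(x) := ∫_{−1}^{1} G_ν(x,y)·f(y) dy, where G_ν is the ν-transmission Green kernel defined below. Then: (i) u(−1) = u(1) = 0; (ii) for every x ∈ (−1,0) ∪ (0,1), u is twice differentiable at x with u″(x) = −f(x); (iii) the one-sided limits u(0⁻) := lim_{x→0⁻} u(x), u(0⁺) := lim_{x→0⁺} u(x), u′(0⁻) := lim_{x→0⁻} u′(x), u′(0⁺) := lim_{x→0⁺} u′(x) exist and satisfy the ν-transmission conditions α·u(0⁻) = β·u(0⁺) and β·u′(0⁻) = α·u′(0⁺). (Thus G_ν is the Green function of the Laplacian on [−1,1] with Dirichlet conditions at ±1 and ν-transmission interior boundary conditions at 0.) -/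

import Mathlib

/-- The Green function of `-d²/dx²` on `[-1,1]` with Dirichlet boundary
conditions at `±1`. -/
noncomputable def greenI (x y : ℝ) : ℝ := (1 + min x y) * (1 - max x y) / 2

/-- The `ν`-transmission Green kernel on `[-1,1]²`, `ν = (α,β)`. -/
noncomputable def greenNu (α β : ℝ) (x y : ℝ) : ℝ :=
  if x < 0 ∧ y < 0 then
    greenI x y + ((β ^ 2 - α ^ 2) / (α ^ 2 + β ^ 2)) * greenI (-x) y
  else if 0 ≤ x ∧ 0 ≤ y then
    greenI x y + ((α ^ 2 - β ^ 2) / (α ^ 2 + β ^ 2)) * greenI (-x) y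
  else (2 * α * β / (α ^ 2 + β ^ 2)) * greenI x y

/-- `u(x) = ∫_{-1}^{1} G_ν(x,y) f(y) dy`. -/
noncomputable def greenNuSol (α β : ℝ) (f : ℝ → ℝ) (x : ℝ) : ℝ :=
  ∫ y in (-1 : ℝ)..1, greenNu α β x y * f y

open MeasureTheory intervalIntegral Set Filter Topology

namespace GreenAux

/-- `∫_{-1}^x (1+y) f(y) dy` -/
noncomputable def IA (f : ℝ → ℝ) (x : ℝ) : ℝ := ∫ y in (-1:ℝ)..x, (1+y) * f y
/-- `∫_x^1 (1-y) f(y) dy` -/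
noncomputable def IE (f : ℝ → ℝ) (x : ℝ) : ℝ := ∫ y in x..(1:ℝ), (1-y) * f y
noncomputable def JB (f : ℝ → ℝ) (x : ℝ) : ℝ := ∫ y in x..(0:ℝ), (1-y) * f y
noncomputable def JC (f : ℝ → ℝ) (x : ℝ) : ℝ := ∫ y in x..(0:ℝ), (1+y) * f y
noncomputable def JP (f : ℝ → ℝ) (x : ℝ) : ℝ := ∫ y in (0:ℝ)..x, (1+y) * f y
noncomputable def JQ (f : ℝ → ℝ) (x : ℝ) : ℝ := ∫ y in (0:ℝ)..x, (1-y) * f y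

noncomputable def uneg (α β : ℝ) (f : ℝ → ℝ) (x : ℝ) : ℝ :=
  ((1-x) + (β^2-α^2)/(α^2+β^2) * (1+x))/2 * IA f x
  + (1+x)/2 * (JB f x + (β^2-α^2)/(α^2+β^2) * JC f x)
  + (2*α*β/(α^2+β^2)) * (1+x)/2 * IE f 0

noncomputable def dneg (α β : ℝ) (f : ℝ → ℝ) (x : ℝ) : ℝ :=
  ((β^2-α^2)/(α^2+β^2) - 1)/2 * IA f x
  + (JB f x + (β^2-α^2)/(α^2+β^2) * JC f x)/2
  + (2*α*β/(α^2+β^2))/2 * IE f 0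

noncomputable def upos (α β : ℝ) (f : ℝ → ℝ) (x : ℝ) : ℝ :=
  (2*α*β/(α^2+β^2)) * (1-x)/2 * IA f 0
  + (1-x)/2 * (JP f x + (α^2-β^2)/(α^2+β^2) * JQ f x)
  + ((1+x) + (α^2-β^2)/(α^2+β^2) * (1-x))/2 * IE f x

noncomputable def dpos (α β : ℝ) (f : ℝ → ℝ) (x : ℝ) : ℝ :=
  -(2*α*β/(α^2+β^2))/2 * IA f 0
  - (JP f x + (α^2-β^2)/(α^2+β^2) * JQ f x)/2
  + (1 - (α^2-β^2)/(α^2+β^2))/2 * IE f x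

variable {f : ℝ → ℝ}

lemma ae_ne_zero : ∀ᵐ y : ℝ, y ≠ (0:ℝ) := by
  rw [ae_iff]; simp [measure_singleton]

lemma cont_g1 (hf : ContinuousOn f (Icc (-1:ℝ) 1)) :
    ContinuousOn (fun y => (1+y) * f y) (Icc (-1:ℝ) 1) :=
  (continuous_const.add continuous_id).continuousOn.mul hf

lemma cont_g2 (hf : ContinuousOn f (Icc (-1:ℝ) 1)) :
    ContinuousOn (fun y => (1-y) * f y) (Icc (-1:ℝ) 1) :=
  (continuous_const.sub continuous_id).continuousOn.mul hf

lemma ii_of_cont {g : ℝ → ℝ} (hg : ContinuousOn g (Icc (-1:ℝ) 1)) {a b : ℝ}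
    (ha : a ∈ Icc (-1:ℝ) 1) (hb : b ∈ Icc (-1:ℝ) 1) :
    IntervalIntegrable g volume a b := by
  refine (hg.mono ?_).intervalIntegrable
  rw [show Icc (-1:ℝ) 1 = uIcc (-1) 1 from (uIcc_of_le (by norm_num)).symm]
  exact uIcc_subset_uIcc (by rw [uIcc_of_le (by norm_num)]; exact ha)
    (by rw [uIcc_of_le (by norm_num)]; exact hb)

lemma ftc_right {g : ℝ → ℝ} (hg : ContinuousOn g (Icc (-1:ℝ) 1)) {a x : ℝ}
    (ha : a ∈ Icc (-1:ℝ) 1) (hx : x ∈ Ioo (-1:ℝ) 1) :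
    HasDerivAt (fun t => ∫ y in a..t, g y) (g x) x :=
  integral_hasDerivAt_right (ii_of_cont hg ha (Ioo_subset_Icc_self hx))
    ((hg.mono Ioo_subset_Icc_self).stronglyMeasurableAtFilter isOpen_Ioo x hx)
    ((hg.mono Ioo_subset_Icc_self).continuousAt (Ioo_mem_nhds hx.1 hx.2))

lemma ftc_left {g : ℝ → ℝ} (hg : ContinuousOn g (Icc (-1:ℝ) 1)) {b x : ℝ}
    (hb : b ∈ Icc (-1:ℝ) 1) (hx : x ∈ Ioo (-1:ℝ) 1) :
    HasDerivAt (fun t => ∫ y in t..b, g y) (-(g x)) x :=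
  integral_hasDerivAt_left (ii_of_cont hg (Ioo_subset_Icc_self hx) hb)
    ((hg.mono Ioo_subset_Icc_self).stronglyMeasurableAtFilter isOpen_Ioo x hx)
    ((hg.mono Ioo_subset_Icc_self).continuousAt (Ioo_mem_nhds hx.1 hx.2))

lemma ii_congr {K k : ℝ → ℝ} {a b : ℝ} (hk : IntervalIntegrable k volume a b)
    (h : ∀ᵐ y : ℝ, y ∈ uIoc a b → K y = k y) : IntervalIntegrable K volume a b :=
  hk.congr_ae (((ae_restrict_iff' measurableSet_uIoc).mpr (h.mono fun _ hy hmem => (hy hmem).symm)))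


lemma eq_neg (α β : ℝ) (hf : ContinuousOn f (Icc (-1:ℝ) 1)) {x : ℝ} (hx : x ∈ Ioo (-1:ℝ) 0) :
    greenNuSol α β f x = uneg α β f x := by
  obtain ⟨hx1, hx0⟩ := hx
  have hxm : x ∈ Icc (-1:ℝ) 1 := ⟨hx1.le, by linarith⟩
  have h0m : (0:ℝ) ∈ Icc (-1:ℝ) 1 := by norm_num
  have hm1 : (-1:ℝ) ∈ Icc (-1:ℝ) 1 := by norm_num
  have h1m : (1:ℝ) ∈ Icc (-1:ℝ) 1 := by norm_num
  have hg1 := cont_g1 hf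
  have hg2 := cont_g2 hf
  set c := (β^2-α^2)/(α^2+β^2) with hc
  set d := 2*α*β/(α^2+β^2) with hd
  set K : ℝ → ℝ := fun y => greenNu α β x y * f y with hK
  set k1 : ℝ → ℝ := fun y => ((1-x) + c*(1+x))/2 * ((1+y) * f y) with hk1
  set k2 : ℝ → ℝ := fun y => (1+x)/2 * ((1-y) * f y + c * ((1+y) * f y)) with hk2
  set k3 : ℝ → ℝ := fun y => d*(1+x)/2 * ((1-y) * f y) with hk3
  have hae1 : ∀ᵐ y : ℝ, y ∈ uIoc (-1:ℝ) x → K y = k1 y := by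
    refine ae_of_all _ fun y hy => ?_
    rw [Set.uIoc_of_le (by linarith : (-1:ℝ) ≤ x)] at hy
    have hyx : y ≤ x := hy.2
    have hy0 : y < 0 := lt_of_le_of_lt hyx hx0
    simp only [hK, hk1, greenNu, if_pos (⟨hx0, hy0⟩ : x < 0 ∧ y < 0), greenI,
      min_eq_right hyx, max_eq_left hyx, min_eq_right (by linarith : y ≤ -x),
      max_eq_left (by linarith : y ≤ -x), hc]
    ring
  have hae2 : ∀ᵐ y : ℝ, y ∈ uIoc x (0:ℝ) → K y = k2 y := by
    filter_upwards [ae_ne_zero] with y hy0 hmem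
    rw [Set.uIoc_of_le hx0.le] at hmem
    have hyneg : y < 0 := lt_of_le_of_ne hmem.2 hy0
    have hxy : x ≤ y := hmem.1.le
    simp only [hK, hk2, greenNu, if_pos (⟨hx0, hyneg⟩ : x < 0 ∧ y < 0), greenI,
      min_eq_left hxy, max_eq_right hxy, min_eq_right (by linarith : y ≤ -x),
      max_eq_left (by linarith : y ≤ -x), hc]
    ring
  have hae3 : ∀ᵐ y : ℝ, y ∈ uIoc (0:ℝ) (1:ℝ) → K y = k3 y := by
    refine ae_of_all _ fun y hy => ?_
    rw [Set.uIoc_of_le (by norm_num : (0:ℝ) ≤ 1)] at hy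
    obtain ⟨hy1, hy2⟩ := hy
    have hb1 : ¬(x < 0 ∧ y < 0) := fun h => absurd hy1 (not_lt.2 h.2.le)
    have hb2 : ¬((0:ℝ) ≤ x ∧ 0 ≤ y) := fun h => absurd h.1 (not_le.2 hx0)
    simp only [hK, hk3, greenNu, if_neg hb1, if_neg hb2, greenI,
      min_eq_left (by linarith : x ≤ y), max_eq_right (by linarith : x ≤ y), hd]
    ring
  have hi1 : IntervalIntegrable k1 volume (-1) x := (ii_of_cont hg1 hm1 hxm).const_mul _
  have hi2 : IntervalIntegrable k2 volume x 0 :=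
    ((ii_of_cont hg2 hxm h0m).add ((ii_of_cont hg1 hxm h0m).const_mul _)).const_mul _
  have hi3 : IntervalIntegrable k3 volume 0 1 := (ii_of_cont hg2 h0m h1m).const_mul _
  have hK1 : IntervalIntegrable K volume (-1) x := ii_congr hi1 hae1
  have hK2 : IntervalIntegrable K volume x 0 := ii_congr hi2 hae2
  have hK3 : IntervalIntegrable K volume 0 1 := ii_congr hi3 hae3
  calc greenNuSol α β f x = ∫ y in (-1:ℝ)..1, K y := rfl
    _ = (∫ y in (-1:ℝ)..0, K y) + ∫ y in (0:ℝ)..1, K y :=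
        (integral_add_adjacent_intervals (hK1.trans hK2) hK3).symm
    _ = ((∫ y in (-1:ℝ)..x, K y) + ∫ y in x..(0:ℝ), K y) + ∫ y in (0:ℝ)..1, K y := by
        rw [integral_add_adjacent_intervals hK1 hK2]
    _ = ((∫ y in (-1:ℝ)..x, k1 y) + ∫ y in x..(0:ℝ), k2 y) + ∫ y in (0:ℝ)..1, k3 y := by
        rw [integral_congr_ae hae1, integral_congr_ae hae2, integral_congr_ae hae3]
    _ = uneg α β f x := by
        simp only [hk1, hk2, hk3]
        rw [intervalIntegral.integral_const_mul, intervalIntegral.integral_const_mul, intervalIntegral.integral_const_mul,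
          integral_add (ii_of_cont hg2 hxm h0m) ((ii_of_cont hg1 hxm h0m).const_mul _),
          intervalIntegral.integral_const_mul]
        unfold uneg IA JB JC IE
        rw [hc, hd]

lemma eq_pos (α β : ℝ) (hf : ContinuousOn f (Icc (-1:ℝ) 1)) {x : ℝ} (hx : x ∈ Ioo (0:ℝ) 1) :
    greenNuSol α β f x = upos α β f x := by
  obtain ⟨hx0, hx1⟩ := hx
  have hxm : x ∈ Icc (-1:ℝ) 1 := ⟨by linarith, hx1.le⟩
  have h0m : (0:ℝ) ∈ Icc (-1:ℝ) 1 := by norm_num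
  have hm1 : (-1:ℝ) ∈ Icc (-1:ℝ) 1 := by norm_num
  have h1m : (1:ℝ) ∈ Icc (-1:ℝ) 1 := by norm_num
  have hg1 := cont_g1 hf
  have hg2 := cont_g2 hf
  set c := (α^2-β^2)/(α^2+β^2) with hc
  set d := 2*α*β/(α^2+β^2) with hd
  set K : ℝ → ℝ := fun y => greenNu α β x y * f y with hK
  set k1 : ℝ → ℝ := fun y => d*(1-x)/2 * ((1+y) * f y) with hk1
  set k2 : ℝ → ℝ := fun y => (1-x)/2 * ((1+y) * f y + c * ((1-y) * f y)) with hk2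
  set k3 : ℝ → ℝ := fun y => ((1+x) + c*(1-x))/2 * ((1-y) * f y) with hk3
  have hae1 : ∀ᵐ y : ℝ, y ∈ uIoc (-1:ℝ) (0:ℝ) → K y = k1 y := by
    filter_upwards [ae_ne_zero] with y hy0 hmem
    rw [Set.uIoc_of_le (by norm_num : (-1:ℝ) ≤ 0)] at hmem
    have hyneg : y < 0 := lt_of_le_of_ne hmem.2 hy0
    have hb1 : ¬(x < 0 ∧ y < 0) := fun h => absurd hx0 (not_lt.2 h.1.le)
    have hb2 : ¬((0:ℝ) ≤ x ∧ 0 ≤ y) := fun h => absurd h.2 (not_le.2 hyneg)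
    simp only [hK, hk1, greenNu, if_neg hb1, if_neg hb2, greenI,
      min_eq_right (by linarith : y ≤ x), max_eq_left (by linarith : y ≤ x), hd]
    ring
  have hae2 : ∀ᵐ y : ℝ, y ∈ uIoc (0:ℝ) x → K y = k2 y := by
    refine ae_of_all _ fun y hy => ?_
    rw [Set.uIoc_of_le hx0.le] at hy
    obtain ⟨hy1, hy2⟩ := hy
    have hb1 : ¬(x < 0 ∧ y < 0) := fun h => absurd hx0 (not_lt.2 h.1.le)
    simp only [hK, hk2, greenNu, if_neg hb1, if_pos (⟨hx0.le, hy1.le⟩ : (0:ℝ) ≤ x ∧ 0 ≤ y),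
      greenI, min_eq_right hy2, max_eq_left hy2,
      min_eq_left (by linarith : -x ≤ y), max_eq_right (by linarith : -x ≤ y), hc]
    ring
  have hae3 : ∀ᵐ y : ℝ, y ∈ uIoc x (1:ℝ) → K y = k3 y := by
    refine ae_of_all _ fun y hy => ?_
    rw [Set.uIoc_of_le hx1.le] at hy
    obtain ⟨hy1, hy2⟩ := hy
    have hb1 : ¬(x < 0 ∧ y < 0) := fun h => absurd hx0 (not_lt.2 h.1.le)
    simp only [hK, hk3, greenNu, if_neg hb1,
      if_pos (⟨hx0.le, by linarith⟩ : (0:ℝ) ≤ x ∧ 0 ≤ y),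
      greenI, min_eq_left hy1.le, max_eq_right hy1.le,
      min_eq_left (by linarith : -x ≤ y), max_eq_right (by linarith : -x ≤ y), hc]
    ring
  have hi1 : IntervalIntegrable k1 volume (-1) 0 := (ii_of_cont hg1 hm1 h0m).const_mul _
  have hi2 : IntervalIntegrable k2 volume 0 x :=
    ((ii_of_cont hg1 h0m hxm).add ((ii_of_cont hg2 h0m hxm).const_mul _)).const_mul _
  have hi3 : IntervalIntegrable k3 volume x 1 := (ii_of_cont hg2 hxm h1m).const_mul _
  have hK1 : IntervalIntegrable K volume (-1) 0 := ii_congr hi1 hae1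
  have hK2 : IntervalIntegrable K volume 0 x := ii_congr hi2 hae2
  have hK3 : IntervalIntegrable K volume x 1 := ii_congr hi3 hae3
  calc greenNuSol α β f x = ∫ y in (-1:ℝ)..1, K y := rfl
    _ = (∫ y in (-1:ℝ)..0, K y) + ∫ y in (0:ℝ)..1, K y :=
        (integral_add_adjacent_intervals hK1 (hK2.trans hK3)).symm
    _ = (∫ y in (-1:ℝ)..0, K y) + ((∫ y in (0:ℝ)..x, K y) + ∫ y in x..(1:ℝ), K y) := by
        rw [integral_add_adjacent_intervals hK2 hK3]
    _ = (∫ y in (-1:ℝ)..0, k1 y) + ((∫ y in (0:ℝ)..x, k2 y) + ∫ y in x..(1:ℝ), k3 y) := by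
        rw [integral_congr_ae hae1, integral_congr_ae hae2, integral_congr_ae hae3]
    _ = upos α β f x := by
        simp only [hk1, hk2, hk3]
        rw [intervalIntegral.integral_const_mul, intervalIntegral.integral_const_mul, intervalIntegral.integral_const_mul,
          integral_add (ii_of_cont hg1 h0m hxm) ((ii_of_cont hg2 h0m hxm).const_mul _),
          intervalIntegral.integral_const_mul]
        unfold upos IA JP JQ IE
        rw [hc, hd]
        ring


lemma hasDerivAt_IA (hf : ContinuousOn f (Icc (-1:ℝ) 1)) {x : ℝ} (hx : x ∈ Ioo (-1:ℝ) 1) :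
    HasDerivAt (IA f) ((1+x) * f x) x := ftc_right (cont_g1 hf) (by norm_num) hx

lemma hasDerivAt_IE (hf : ContinuousOn f (Icc (-1:ℝ) 1)) {x : ℝ} (hx : x ∈ Ioo (-1:ℝ) 1) :
    HasDerivAt (IE f) (-((1-x) * f x)) x := ftc_left (cont_g2 hf) (by norm_num) hx

lemma hasDerivAt_JB (hf : ContinuousOn f (Icc (-1:ℝ) 1)) {x : ℝ} (hx : x ∈ Ioo (-1:ℝ) 1) :
    HasDerivAt (JB f) (-((1-x) * f x)) x := ftc_left (cont_g2 hf) (by norm_num) hx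

lemma hasDerivAt_JC (hf : ContinuousOn f (Icc (-1:ℝ) 1)) {x : ℝ} (hx : x ∈ Ioo (-1:ℝ) 1) :
    HasDerivAt (JC f) (-((1+x) * f x)) x := ftc_left (cont_g1 hf) (by norm_num) hx

lemma hasDerivAt_JP (hf : ContinuousOn f (Icc (-1:ℝ) 1)) {x : ℝ} (hx : x ∈ Ioo (-1:ℝ) 1) :
    HasDerivAt (JP f) ((1+x) * f x) x := ftc_right (cont_g1 hf) (by norm_num) hx

lemma hasDerivAt_JQ (hf : ContinuousOn f (Icc (-1:ℝ) 1)) {x : ℝ} (hx : x ∈ Ioo (-1:ℝ) 1) :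
    HasDerivAt (JQ f) ((1-x) * f x) x := ftc_right (cont_g2 hf) (by norm_num) hx

lemma hasDerivAt_uneg (α β : ℝ) (hf : ContinuousOn f (Icc (-1:ℝ) 1)) {x : ℝ}
    (hx : x ∈ Ioo (-1:ℝ) 1) : HasDerivAt (uneg α β f) (dneg α β f x) x := by
  set c := (β^2-α^2)/(α^2+β^2) with hc
  set d := 2*α*β/(α^2+β^2) with hd
  have hA := hasDerivAt_IA hf hx
  have hB := hasDerivAt_JB hf hx
  have hC := hasDerivAt_JC hf hx
  have l1 : HasDerivAt (fun t : ℝ => ((1-t) + c*(1+t))/2) ((0-1 + c*(0+1))/2) x :=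
    (((hasDerivAt_const x (1:ℝ)).sub (hasDerivAt_id' x)).add
      (((hasDerivAt_const x (1:ℝ)).add (hasDerivAt_id' x)).const_mul c)).div_const 2
  have l2 : HasDerivAt (fun t : ℝ => (1+t)/2) ((0+1)/2) x :=
    ((hasDerivAt_const x (1:ℝ)).add (hasDerivAt_id' x)).div_const 2
  have l3 : HasDerivAt (fun t : ℝ => d*(1+t)/2 * IE f 0) (d*(0+1)/2 * IE f 0) x := by
    have := ((((hasDerivAt_const x (1:ℝ)).add (hasDerivAt_id' x)).const_mul d).div_const
      2).mul_const (IE f 0)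
    simpa using this
  have H := ((l1.mul hA).add (l2.mul (hB.add (hC.const_mul c)))).add l3
  have hfun : uneg α β f =
      fun t => ((1-t) + c*(1+t))/2 * IA f t + (1+t)/2 * (JB f t + c * JC f t)
        + d*(1+t)/2 * IE f 0 := rfl
  rw [hfun]
  refine H.congr_deriv ?_
  unfold dneg
  rw [← hc, ← hd]
  rw [Pi.add_apply]
  ring

lemma hasDerivAt_dneg (α β : ℝ) (hf : ContinuousOn f (Icc (-1:ℝ) 1)) {x : ℝ}
    (hx : x ∈ Ioo (-1:ℝ) 1) : HasDerivAt (dneg α β f) (-f x) x := by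
  set c := (β^2-α^2)/(α^2+β^2) with hc
  set d := 2*α*β/(α^2+β^2) with hd
  have hA := hasDerivAt_IA hf hx
  have hB := hasDerivAt_JB hf hx
  have hC := hasDerivAt_JC hf hx
  have H := (((hA.const_mul ((c-1)/2)).add ((hB.add (hC.const_mul c)).div_const 2)).add
    (hasDerivAt_const x (d/2 * IE f 0)))
  have hfun : dneg α β f =
      fun t => (c-1)/2 * IA f t + (JB f t + c * JC f t)/2 + d/2 * IE f 0 := rfl
  rw [hfun]
  refine H.congr_deriv ?_
  ring

lemma hasDerivAt_upos (α β : ℝ) (hf : ContinuousOn f (Icc (-1:ℝ) 1)) {x : ℝ}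
    (hx : x ∈ Ioo (-1:ℝ) 1) : HasDerivAt (upos α β f) (dpos α β f x) x := by
  set c := (α^2-β^2)/(α^2+β^2) with hc
  set d := 2*α*β/(α^2+β^2) with hd
  have hP := hasDerivAt_JP hf hx
  have hQ := hasDerivAt_JQ hf hx
  have hE := hasDerivAt_IE hf hx
  have l1 : HasDerivAt (fun t : ℝ => d*(1-t)/2 * IA f 0) (d*(0-1)/2 * IA f 0) x := by
    have := ((((hasDerivAt_const x (1:ℝ)).sub (hasDerivAt_id' x)).const_mul d).div_const
      2).mul_const (IA f 0)
    simpa using this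
  have l2 : HasDerivAt (fun t : ℝ => (1-t)/2) ((0-1)/2) x :=
    ((hasDerivAt_const x (1:ℝ)).sub (hasDerivAt_id' x)).div_const 2
  have l3 : HasDerivAt (fun t : ℝ => ((1+t) + c*(1-t))/2) ((0+1 + c*(0-1))/2) x :=
    (((hasDerivAt_const x (1:ℝ)).add (hasDerivAt_id' x)).add
      (((hasDerivAt_const x (1:ℝ)).sub (hasDerivAt_id' x)).const_mul c)).div_const 2
  have H := (l1.add (l2.mul (hP.add (hQ.const_mul c)))).add (l3.mul hE)
  have hfun : upos α β f =
      fun t => d*(1-t)/2 * IA f 0 + (1-t)/2 * (JP f t + c * JQ f t)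
        + ((1+t) + c*(1-t))/2 * IE f t := rfl
  rw [hfun]
  refine H.congr_deriv ?_
  unfold dpos
  rw [← hc, ← hd]
  rw [Pi.add_apply]
  ring

lemma hasDerivAt_dpos (α β : ℝ) (hf : ContinuousOn f (Icc (-1:ℝ) 1)) {x : ℝ}
    (hx : x ∈ Ioo (-1:ℝ) 1) : HasDerivAt (dpos α β f) (-f x) x := by
  set c := (α^2-β^2)/(α^2+β^2) with hc
  set d := 2*α*β/(α^2+β^2) with hd
  have hP := hasDerivAt_JP hf hx
  have hQ := hasDerivAt_JQ hf hx
  have hE := hasDerivAt_IE hf hx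
  have H := (((hasDerivAt_const x (-d/2 * IA f 0)).sub
    ((hP.add (hQ.const_mul c)).div_const 2)).add (hE.const_mul ((1-c)/2)))
  have hfun : dpos α β f =
      fun t => -d/2 * IA f 0 - (JP f t + c * JQ f t)/2 + (1-c)/2 * IE f t := rfl
  rw [hfun]
  refine H.congr_deriv ?_
  ring

lemma sol_neg_one (α β : ℝ) (f : ℝ → ℝ) : greenNuSol α β f (-1) = 0 := by
  unfold greenNuSol
  rw [show (0:ℝ) = ∫ y in (-1:ℝ)..1, (0:ℝ) by simp]
  refine integral_congr fun y hy => ?_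
  rw [Set.uIcc_of_le (by norm_num : (-1:ℝ) ≤ 1)] at hy
  have e1 : greenI (-1) y = 0 := by
    simp [greenI, min_eq_left hy.1]
  have e2 : greenI (-(-1)) y = 0 := by
    rw [neg_neg]
    simp [greenI, max_eq_left hy.2]
  simp only [greenNu, e1, e2]
  split_ifs <;> simp

lemma sol_one (α β : ℝ) (f : ℝ → ℝ) : greenNuSol α β f 1 = 0 := by
  unfold greenNuSol
  rw [show (0:ℝ) = ∫ y in (-1:ℝ)..1, (0:ℝ) by simp]
  refine integral_congr fun y hy => ?_
  rw [Set.uIcc_of_le (by norm_num : (-1:ℝ) ≤ 1)] at hy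
  have e1 : greenI 1 y = 0 := by
    simp [greenI, max_eq_left hy.2]
  have e2 : greenI (-1) y = 0 := by
    simp [greenI, min_eq_left hy.1]
  simp only [greenNu, e1, e2]
  split_ifs <;> simp

end GreenAux


open GreenAux

/-- `G_ν` is the Green function of the Laplacian on `[-1,1]` with Dirichlet
conditions at `±1` and `ν`-transmission interior boundary conditions at `0`:
for continuous `f`, the function `u(x) = ∫_{-1}^1 G_ν(x,y) f(y) dy` vanishes
at `±1`, satisfies `u'' = -f` on `(-1,0) ∪ (0,1)`, and its one-sided limits at
`0` satisfy `α·u(0⁻) = β·u(0⁺)` and `β·u'(0⁻) = α·u'(0⁺)`. -/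
theorem green_interval_transmission (α β : ℝ) (hν : (α, β) ≠ (0, 0))
    (f : ℝ → ℝ) (hf : ContinuousOn f (Set.Icc (-1) 1)) :
    greenNuSol α β f (-1) = 0 ∧ greenNuSol α β f 1 = 0 ∧
    (∀ x ∈ Set.Ioo (-1 : ℝ) 0 ∪ Set.Ioo (0 : ℝ) 1,
      DifferentiableAt ℝ (greenNuSol α β f) x ∧
      HasDerivAt (deriv (greenNuSol α β f)) (-f x) x) ∧
    ∃ L₁ L₂ M₁ M₂ : ℝ,
      Filter.Tendsto (greenNuSol α β f) (nhdsWithin 0 (Set.Iio 0)) (nhds L₁) ∧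
      Filter.Tendsto (greenNuSol α β f) (nhdsWithin 0 (Set.Ioi 0)) (nhds L₂) ∧
      Filter.Tendsto (deriv (greenNuSol α β f)) (nhdsWithin 0 (Set.Iio 0)) (nhds M₁) ∧
      Filter.Tendsto (deriv (greenNuSol α β f)) (nhdsWithin 0 (Set.Ioi 0)) (nhds M₂) ∧
      α * L₁ = β * L₂ ∧ β * M₁ = α * M₂ := by
  have hs : α^2 + β^2 ≠ 0 := by
    intro h
    apply hν
    have hα : α = 0 := by nlinarith [sq_nonneg α, sq_nonneg β]
    have hβ : β = 0 := by nlinarith [sq_nonneg α, sq_nonneg β]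
    simp [hα, hβ]
  have h0I : (0:ℝ) ∈ Ioo (-1:ℝ) 1 := by norm_num
  have hder_neg : ∀ y ∈ Ioo (-1:ℝ) 0, deriv (greenNuSol α β f) y = dneg α β f y := by
    intro y hy
    have hev : greenNuSol α β f =ᶠ[𝓝 y] uneg α β f :=
      eventuallyEq_of_mem (isOpen_Ioo.mem_nhds hy) (fun z hz => eq_neg α β hf hz)
    rw [hev.deriv_eq, (hasDerivAt_uneg α β hf ⟨hy.1, by linarith [hy.2]⟩).deriv]
  have hder_pos : ∀ y ∈ Ioo (0:ℝ) 1, deriv (greenNuSol α β f) y = dpos α β f y := by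
    intro y hy
    have hev : greenNuSol α β f =ᶠ[𝓝 y] upos α β f :=
      eventuallyEq_of_mem (isOpen_Ioo.mem_nhds hy) (fun z hz => eq_pos α β hf hz)
    rw [hev.deriv_eq, (hasDerivAt_upos α β hf ⟨by linarith [hy.1], hy.2⟩).deriv]
  refine ⟨sol_neg_one α β f, sol_one α β f, ?_, ?_⟩
  · rintro x (hx | hx)
    · have hxI : x ∈ Ioo (-1:ℝ) 1 := ⟨hx.1, by linarith [hx.2]⟩
      have hev : greenNuSol α β f =ᶠ[𝓝 x] uneg α β f :=
        eventuallyEq_of_mem (isOpen_Ioo.mem_nhds hx) (fun z hz => eq_neg α β hf hz)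
      refine ⟨(hev.differentiableAt_iff).mpr (hasDerivAt_uneg α β hf hxI).differentiableAt, ?_⟩
      exact (hasDerivAt_dneg α β hf hxI).congr_of_eventuallyEq
        (eventuallyEq_of_mem (isOpen_Ioo.mem_nhds hx) hder_neg)
    · have hxI : x ∈ Ioo (-1:ℝ) 1 := ⟨by linarith [hx.1], hx.2⟩
      have hev : greenNuSol α β f =ᶠ[𝓝 x] upos α β f :=
        eventuallyEq_of_mem (isOpen_Ioo.mem_nhds hx) (fun z hz => eq_pos α β hf hz)
      refine ⟨(hev.differentiableAt_iff).mpr (hasDerivAt_upos α β hf hxI).differentiableAt, ?_⟩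
      exact (hasDerivAt_dpos α β hf hxI).congr_of_eventuallyEq
        (eventuallyEq_of_mem (isOpen_Ioo.mem_nhds hx) hder_pos)
  · have hmemL : Ioo (-1:ℝ) 0 ∈ 𝓝[<] (0:ℝ) :=
      Ioo_mem_nhdsLT_of_mem (by norm_num : (0:ℝ) ∈ Ioc (-1:ℝ) 0)
    have hmemR : Ioo (0:ℝ) 1 ∈ 𝓝[>] (0:ℝ) :=
      Ioo_mem_nhdsGT_of_mem (by norm_num : (0:ℝ) ∈ Ico (0:ℝ) 1)
    refine ⟨uneg α β f 0, upos α β f 0, dneg α β f 0, dpos α β f 0, ?_, ?_, ?_, ?_, ?_, ?_⟩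
    · exact ((hasDerivAt_uneg α β hf h0I).continuousAt.continuousWithinAt).congr'
        (eventuallyEq_of_mem hmemL (fun z hz => (eq_neg α β hf hz).symm))
    · exact ((hasDerivAt_upos α β hf h0I).continuousAt.continuousWithinAt).congr'
        (eventuallyEq_of_mem hmemR (fun z hz => (eq_pos α β hf hz).symm))
    · exact ((hasDerivAt_dneg α β hf h0I).continuousAt.continuousWithinAt).congr'
        (eventuallyEq_of_mem hmemL (fun z hz => (hder_neg z hz).symm))
    · exact ((hasDerivAt_dpos α β hf h0I).continuousAt.continuousWithinAt).congr'
        (eventuallyEq_of_mem hmemR (fun z hz => (hder_pos z hz).symm))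
    · simp only [uneg, upos, JB, JC, JP, JQ, intervalIntegral.integral_same]
      field_simp
      ring
    · simp only [dneg, dpos, JB, JC, JP, JQ, intervalIntegral.integral_same]
      field_simp
      ring
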